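/- Let P = (p_{i,j}) be an I×I matrix with all entries strictly positive which belongs to the diagonal-effect mixture model M2. Then P belongs to the diagonal-effect toric model M1. That is, in the open probability simplex, M2 ⊆ M1. -/

import Mathlib

/-- The diagonal-effect toric model `M1`: `I × I` nonnegative matrices summing to `1`
with `p i j = ζʳ i * ζᶜ j` off the diagonal and `p i i = ζʳ i * ζᶜ i * ζᵞ i`
for some nonnegative vectors `ζʳ, ζᶜ, ζᵞ`. -/
def inM1 {I : ℕ} (P : Matrix (Fin I) (Fin I) ℝ) : Prop :=
  (∀ i j, 0 ≤ P i j) ∧ (∑ i, ∑ j, P i j = 1) ∧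
  ∃ zr zc zg : Fin I → ℝ,
    (∀ i, 0 ≤ zr i) ∧ (∀ i, 0 ≤ zc i) ∧ (∀ i, 0 ≤ zg i) ∧
    (∀ i j, i ≠ j → P i j = zr i * zc j) ∧
    (∀ i, P i i = zr i * zc i * zg i)

/-- The diagonal-effect mixture model `M2`: matrices of the form
`α • (r cᵗ entrywise) + (1-α) • diag d` with `r, c, d` nonnegative vectors summing
to `1` and `α ∈ [0,1]`. -/
def inM2 {I : ℕ} (P : Matrix (Fin I) (Fin I) ℝ) : Prop :=
  ∃ (α : ℝ) (r c d : Fin I → ℝ),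
    0 ≤ α ∧ α ≤ 1 ∧
    (∀ i, 0 ≤ r i) ∧ (∀ i, 0 ≤ c i) ∧ (∀ i, 0 ≤ d i) ∧
    (∑ i, r i = 1) ∧ (∑ i, c i = 1) ∧ (∑ i, d i = 1) ∧
    (∀ i j, i ≠ j → P i j = α * r i * c j) ∧
    (∀ i, P i i = α * r i * c i + (1 - α) * d i)

/-- In the open probability simplex, `M2 ⊆ M1`: a strictly positive matrix of the
diagonal-effect mixture model also belongs to the diagonal-effect toric model. -/
theorem M2_subset_M1_of_pos {I : ℕ} (P : Matrix (Fin I) (Fin I) ℝ)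
    (hpos : ∀ i j, 0 < P i j) (hP : inM2 P) : inM1 P := by
  obtain ⟨α, r, c, d, hα0, hα1, hr, hc, hd, hrs, hcs, hds, hoff, hdiag⟩ := hP
  have hPform : ∀ i j, P i j = α * r i * c j + (1 - α) * (if i = j then d i else 0) := by
    intro i j
    by_cases h : i = j
    · subst h; simp [hdiag i]
    · simp [hoff i j h, h]
  have hsum : ∑ i, ∑ j, P i j = 1 := by
    have : ∑ i, ∑ j, P i j
        = ∑ i, (α * r i * ∑ j, c j + (1 - α) * d i) := by
      refine Finset.sum_congr rfl fun i _ => ?_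
      simp_rw [hPform i, Finset.sum_add_distrib, ← Finset.mul_sum,
        Finset.sum_ite_eq, Finset.mem_univ, if_true]
    rw [this, hcs]
    simp_rw [mul_one]
    rw [Finset.sum_add_distrib, ← Finset.mul_sum, hrs, ← Finset.mul_sum, hds]
    ring
  refine ⟨fun i j => (hpos i j).le, hsum, ?_⟩
  -- case on I
  clear hPform hsum
  match I, P, r, c, d, hpos, hr, hc, hds, hoff with
  | 0, P, r, c, d, hpos, hr, hc, hds, hoff =>
    exact absurd hds (by simp)
  | 1, P, r, c, d, hpos, hr, hc, hds, hoff =>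
    refine ⟨fun _ => 1, fun _ => 1, fun i => P i i, fun _ => zero_le_one,
      fun _ => zero_le_one, fun i => (hpos i i).le, ?_, fun i => by ring⟩
    intro i j hij
    exact absurd (Subsingleton.elim i j) hij
  | (n + 2), P, r, c, d, hpos, hr, hc, hds, hoff =>
    have hrpos : ∀ i, 0 < α * r i := by
      intro i
      have hj : i ≠ (if i = 0 then 1 else 0) := by
        by_cases h : i = 0 <;> simp [h] <;> omega
      have := hpos i (if i = 0 then 1 else 0)
      rw [hoff i _ hj] at this
      nlinarith [hc (if i = 0 then (1 : Fin (n+2)) else 0)]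
    have hcpos : ∀ j, 0 < c j := by
      intro j
      have hi : (if j = 0 then (1 : Fin (n+2)) else 0) ≠ j := by
        by_cases h : j = 0 <;> simp [h] <;> omega
      have := hpos (if j = 0 then 1 else 0) j
      rw [hoff _ j hi] at this
      nlinarith [hrpos (if j = 0 then (1 : Fin (n+2)) else 0), hα0,
        hr (if j = 0 then (1 : Fin (n+2)) else 0), hα1]
    refine ⟨fun i => α * r i, c, fun i => P i i / (α * r i * c i),
      fun i => (hrpos i).le, fun i => (hcpos i).le,
      fun i => div_nonneg (hpos i i).le (mul_pos (hrpos i) (hcpos i)).le, ?_, ?_⟩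
    · intro i j hij; rw [hoff i j hij]
    · intro i
      have h1 : α * r i ≠ 0 := (hrpos i).ne'
      have h2 : c i ≠ 0 := (hcpos i).ne'
      field_simp
      rw [eq_div_iff h1]; ring
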